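/- Let δ ∈ (0,1), L > 0 and ρ ∈ ℝ, and let F : ℝ^d → ℝ^d be L-Lipschitz and ρ-comonotone. Let {τ_k}_{k≥−1} and {η_k}_{k≥0} be sequences of positive reals with τ_{−1} > (1−δ)/L and η₀ > (1−δ)²/L + 2(1−δ)ρ, such that for each k ≥ 0 either τ_k = τ_{k−1} or there exist points a, b ∈ ℝ^d with ‖F a − F b‖ > ((1−δ)/τ_k)‖a − b‖, and for each k ≥ 1 either η_k = η_{k−1} or there exist points a, b ∈ ℝ^d and a number τ̂ > (1−δ)/L with ⟨F a − F b, a − b⟩ < ((η_k/(1−δ) − τ̂)/2)‖F a − F b‖². Then τ_k > (1−δ)/L for all k ≥ 0 and η_k > (1−δ)²/L + 2(1−δ)ρ for all k ≥ 0. -/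

import Mathlib

open scoped RealInnerProductSpace

/-- **Lower bounds for the FEG-A backtracking step sizes** (Lemma 2 of the paper).
Here `τ k` denotes the paper's `τ_{k-1}` (so `τ 0` is the input `τ_{-1}`), while
`η k` denotes the paper's `η_k` (so `η 0` is the input `η₀`).  Whenever a step
size strictly decreases, the value after the decrease violated the corresponding
Lipschitz (for `τ`) or comonotonicity (for `η`) check.  Then every `τ_k`
(`k ≥ 0`) stays above `(1-δ)/L` and every `η_k` stays above
`(1-δ)²/L + 2(1-δ)ρ`. -/
theorem feg_a_step_size_lower_bounds
    {d : ℕ}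
    (δ L ρ : ℝ) (hδ : δ ∈ Set.Ioo (0 : ℝ) 1) (hL : 0 < L)
    (F : EuclideanSpace ℝ (Fin d) → EuclideanSpace ℝ (Fin d))
    (hLip : ∀ z z' : EuclideanSpace ℝ (Fin d), ‖F z - F z'‖ ≤ L * ‖z - z'‖)
    (hComono : ∀ z z' : EuclideanSpace ℝ (Fin d),
      ρ * ‖F z - F z'‖ ^ 2 ≤ ⟪F z - F z', z - z'⟫)
    (τ η : ℕ → ℝ)
    (hτpos : ∀ k, 0 < τ k) (hηpos : ∀ k, 0 < η k)
    (hτinit : (1 - δ) / L < τ 0)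
    (hηinit : (1 - δ) ^ 2 / L + 2 * (1 - δ) * ρ < η 0)
    (hτstep : ∀ k : ℕ, τ (k + 1) = τ k ∨
      ∃ a b : EuclideanSpace ℝ (Fin d),
        ((1 - δ) / τ (k + 1)) * ‖a - b‖ < ‖F a - F b‖)
    (hηstep : ∀ k : ℕ, η (k + 1) = η k ∨
      ∃ (a b : EuclideanSpace ℝ (Fin d)) (τhat : ℝ), (1 - δ) / L < τhat ∧
        ⟪F a - F b, a - b⟫ < ((η (k + 1) / (1 - δ) - τhat) / 2) * ‖F a - F b‖ ^ 2) :
    (∀ k : ℕ, (1 - δ) / L < τ k) ∧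
    (∀ k : ℕ, (1 - δ) ^ 2 / L + 2 * (1 - δ) * ρ < η k) := by
  obtain ⟨hδ0, hδ1⟩ := hδ
  have h1δ : 0 < 1 - δ := by linarith
  constructor
  · intro k
    induction k with
    | zero => exact hτinit
    | succ n ih =>
      rcases hτstep n with h | ⟨a, b, hab⟩
      · rw [h]; exact ih
      · have hFab : ‖F a - F b‖ ≤ L * ‖a - b‖ := hLip a b
        have hab' : ((1 - δ) / τ (n + 1)) * ‖a - b‖ < L * ‖a - b‖ :=
          hab.trans_le hFab
        have hab0 : 0 < ‖a - b‖ := by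
          rcases (norm_nonneg (a - b)).lt_or_eq with h0 | h0
          · exact h0
          · exfalso; rw [← h0] at hab'; simp at hab'
        have h2 : (1 - δ) / τ (n + 1) < L := lt_of_mul_lt_mul_right hab' hab0.le
        have h3 : 1 - δ < L * τ (n + 1) := (div_lt_iff₀ (hτpos (n+1))).mp h2
        rw [div_lt_iff₀ hL]
        linarith [h3, mul_comm L (τ (n+1))]
  · intro k
    induction k with
    | zero => exact hηinit
    | succ n ih =>
      rcases hηstep n with h | ⟨a, b, τhat, hτhat, hab⟩
      · rw [h]; exact ih
      · have hc := hComono a b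
        set s := ‖F a - F b‖ ^ 2 with hs
        have hs0 : 0 ≤ s := by positivity
        have hmul : ρ * s < ((η (n + 1) / (1 - δ) - τhat) / 2) * s :=
          lt_of_le_of_lt hc hab
        have hspos : 0 < s := by
          rcases hs0.lt_or_eq with h0 | h0
          · exact h0
          · exfalso; rw [← h0] at hmul; simp at hmul
        have key : ρ < (η (n + 1) / (1 - δ) - τhat) / 2 := by
          have := (mul_lt_mul_iff_of_pos_right hspos).mp hmul
          linarith
        have h4 : (2 * ρ + τhat) * (1 - δ) < η (n + 1) := by
          have h5 : 2 * ρ + τhat < η (n + 1) / (1 - δ) := by linarith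
          exact (lt_div_iff₀ h1δ).mp h5
        have h6 : (1 - δ) / L * (1 - δ) < τhat * (1 - δ) :=
          (mul_lt_mul_iff_of_pos_right h1δ).mpr hτhat
        have h7 : (1 - δ) ^ 2 / L = (1 - δ) / L * (1 - δ) := by ring
        nlinarith [h4, h6, h7]
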